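/- For every composition κ, the polynomial f^{K(κ)}(q) = Σ_{μ ≤ κ} q^{|μ|} is unimodal, where the sum is over compositions μ with componentwise μᵢ ≤ κᵢ. -/

import Mathlib

open Polynomial

/-- `idealCount κ n` is the number of compositions `μ ≤ κ` (componentwise,
with `μ` having at most as many parts as `κ`) whose parts sum to `n`. -/
noncomputable def idealCount (κ : List ℕ) (n : ℕ) : ℕ :=
  Nat.card {μ : List ℕ // μ.length ≤ κ.length ∧ (∀ x ∈ μ, 1 ≤ x) ∧
    (∀ i, i < μ.length → μ.getD i 0 ≤ κ.getD i 0) ∧ μ.sum = n}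

/-- The generating polynomial `f^{K(κ)}(q) = ∑_{μ ≤ κ} q^{|μ|}`. -/
noncomputable def idealPoly (κ : List ℕ) : Polynomial ℝ :=
  ∑ n ∈ Finset.range (κ.sum + 1), C (idealCount κ n : ℝ) * X ^ n

/-- A polynomial is unimodal if its coefficient sequence weakly increases
up to some index `m` and weakly decreases afterwards. -/
def PolyUnimodal (f : Polynomial ℝ) : Prop :=
  ∃ m : ℕ, (∀ i, i < m → f.coeff i ≤ f.coeff (i + 1)) ∧
    (∀ i, m ≤ i → f.coeff (i + 1) ≤ f.coeff i)

/-! ### A recursive count -/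

/-- Recursive version of `idealCount`. -/
def cnt : List ℕ → ℕ → ℕ
  | [], n => if n = 0 then 1 else 0
  | (k :: κ), n => if n = 0 then 1 else ∑ i ∈ Finset.Ico (n - k) n, cnt κ i

lemma cnt_zero (κ : List ℕ) : cnt κ 0 = 1 := by cases κ <;> simp [cnt]

lemma cnt_cons (k : ℕ) (κ : List ℕ) (n : ℕ) (hn : n ≠ 0) :
    cnt (k :: κ) n = ∑ i ∈ Finset.Ico (n - k) n, cnt κ i := by simp [cnt, hn]

lemma cnt_eq_zero (κ : List ℕ) : ∀ n, κ.sum < n → cnt κ n = 0 := by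
  induction κ with
  | nil => intro n hn; simp [cnt]; omega
  | cons k κ ih =>
    intro n hn
    simp only [List.sum_cons] at hn
    rw [cnt_cons _ _ _ (by omega)]
    apply Finset.sum_eq_zero
    intro i hi
    simp only [Finset.mem_Ico] at hi
    exact ih i (by omega)

/-! ### Unimodality of `cnt` -/

def SeqUnimodal (a : ℕ → ℕ) : Prop :=
  ∃ m : ℕ, (∀ i, i < m → a i ≤ a (i + 1)) ∧ (∀ i, m ≤ i → a (i + 1) ≤ a i)

lemma mono_of_uni {a : ℕ → ℕ} {m : ℕ} (h : ∀ i, i < m → a i ≤ a (i + 1)) :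
    ∀ i j, i ≤ j → j ≤ m → a i ≤ a j := by
  intro i j hij hjm
  induction j with
  | zero => exact le_of_eq (by rw [Nat.le_zero.mp hij])
  | succ j ihj =>
    rcases Nat.eq_or_lt_of_le hij with rfl | hlt
    · rfl
    · exact le_trans (ihj (by omega) (by omega)) (h j (by omega))

lemma anti_of_uni {a : ℕ → ℕ} {m : ℕ} (h : ∀ i, m ≤ i → a (i + 1) ≤ a i) :
    ∀ i j, m ≤ i → i ≤ j → a j ≤ a i := by
  intro i j hmi hij
  induction j with
  | zero => exact le_of_eq (by rw [Nat.le_zero.mp hij])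
  | succ j ihj =>
    rcases Nat.eq_or_lt_of_le hij with rfl | hlt
    · rfl
    · exact le_trans (h j (by omega)) (ihj (by omega))

/-- Single-crossing claim: once a unimodal sequence drops below its value `k`
steps earlier, it stays (weakly) below. -/
lemma a_claim {a : ℕ → ℕ} (ha : SeqUnimodal a) {k n : ℕ} (hk : k ≤ n)
    (hlt : a n < a (n - k)) : ∀ j, n ≤ j → a j ≤ a (j - k) := by
  obtain ⟨m, h1, h2⟩ := ha
  have hnm : m < n := by
    by_contra hc
    exact absurd (mono_of_uni h1 (n - k) n (by omega) (by omega)) (by omega)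
  intro j hj
  by_cases hjk : m ≤ j - k
  · exact anti_of_uni h2 (j - k) j hjk (by omega)
  · calc a j ≤ a n := anti_of_uni h2 n j (by omega) hj
      _ ≤ a (n - k) := le_of_lt hlt
      _ ≤ a (j - k) := mono_of_uni h1 (n - k) (j - k) (by omega) (by omega)

lemma cnt_unimodal (κ : List ℕ) (hκ : ∀ x ∈ κ, 1 ≤ x) : SeqUnimodal (cnt κ) := by
  induction κ with
  | nil =>
    exact ⟨0, fun i hi => by omega, fun i _ => by simp [cnt]⟩
  | cons k κ ih =>
    have hk1 : 1 ≤ k := hκ k (by simp)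
    have ha := ih (fun x hx => hκ x (by simp [hx]))
    set a := cnt κ with ha_def
    set b := cnt (k :: κ) with hb_def
    have key : ∀ n, k ≤ n + 1 →
        b (n + 2) + a (n + 1 - k) = b (n + 1) + a (n + 1) := by
      intro n hkn
      rw [hb_def, cnt_cons _ _ _ (by omega), cnt_cons _ _ _ (by omega)]
      have h1 : n + 2 - k = (n + 1 - k) + 1 := by omega
      rw [h1]
      rw [← Finset.sum_Ico_succ_top (by omega : n + 1 - k ≤ n + 1)]
      rw [Finset.sum_eq_sum_Ico_succ_bot (by omega : n + 1 - k < n + 2)]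
      ring
    have key2 : ∀ n, n + 1 < k → b (n + 2) = b (n + 1) + a (n + 1) := by
      intro n hkn
      rw [hb_def, cnt_cons _ _ _ (by omega), cnt_cons _ _ _ (by omega)]
      have h1 : n + 2 - k = 0 := by omega
      have h2 : n + 1 - k = 0 := by omega
      rw [h1, h2, Finset.sum_Ico_eq_sum_range, Finset.sum_Ico_eq_sum_range]
      simp [Finset.sum_range_succ, ha_def]
    have hb0 : b 0 = 1 := cnt_zero _
    have hb1 : b 1 = 1 := by
      rw [hb_def, cnt_cons _ _ _ (by omega)]
      have : 1 - k = 0 := by omega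
      rw [this]
      simp [ha_def, cnt_zero]
    have dip2 : ∀ n, b (n + 2) < b (n + 1) → ∀ q, n ≤ q → b (q + 2) ≤ b (q + 1) := by
      intro n hdec
      have hkn : k ≤ n + 1 := by
        by_contra hc
        have := key2 n (by omega)
        omega
      have halt : a (n + 1) < a (n + 1 - k) := by
        have := key n hkn
        omega
      have hclaim := a_claim ha hkn halt
      intro q hq
      have h1 := key q (by omega)
      have h2 := hclaim (q + 1) (by omega)
      omega
    by_cases hex : ∃ n, b (n + 2) < b (n + 1)
    · set n0 := Nat.find hex with hn0
      have hspec := Nat.find_spec hex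
      refine ⟨n0 + 1, ?_, ?_⟩
      · intro i hi
        match i with
        | 0 => exact le_of_eq (hb0.trans hb1.symm)
        | (j + 1) =>
          have hmin := Nat.find_min hex (m := j) (by omega)
          have e : j + 1 + 1 = j + 2 := rfl
          rw [e]
          omega
      · intro i hi
        obtain ⟨q, rfl⟩ : ∃ q, i = q + 1 := ⟨i - 1, by omega⟩
        have := dip2 n0 hspec q (by omega)
        have e : q + 1 + 1 = q + 2 := rfl
        rw [e]
        exact this
    · exfalso
      push_neg at hex
      have hz : b ((k :: κ).sum + 1) = 0 := cnt_eq_zero _ _ (by omega)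
      have hmono : ∀ j, b 1 ≤ b (j + 1) := by
        intro j
        induction j with
        | zero => exact le_rfl
        | succ j ihj => exact le_trans ihj (hex j)
      have h2 : b 1 ≤ b ((k :: κ).sum + 1) := hmono _
      omega

/-! ### `idealCount` satisfies the same recursion -/

def IC (κ : List ℕ) (n : ℕ) (μ : List ℕ) : Prop :=
  μ.length ≤ κ.length ∧ (∀ x ∈ μ, 1 ≤ x) ∧
    (∀ i, i < μ.length → μ.getD i 0 ≤ κ.getD i 0) ∧ μ.sum = n

lemma idealCount_eq (κ : List ℕ) (n : ℕ) : idealCount κ n = Nat.card {μ // IC κ n μ} := rfl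

lemma finite_aux (L B : ℕ) : {l : List ℕ | l.length ≤ L ∧ ∀ x ∈ l, x ≤ B}.Finite := by
  have h := (List.finite_length_le (Fin (B + 1)) L).image (List.map Fin.val)
  refine h.subset ?_
  rintro l ⟨hlen, hmem⟩
  refine ⟨l.attach.map (fun x => ⟨x.1, Nat.lt_succ_of_le (hmem x.1 x.2)⟩), ?_, ?_⟩
  · simpa using hlen
  · simp [List.map_map]

lemma finite_IC (κ : List ℕ) (n : ℕ) : Finite {μ // IC κ n μ} := by
  have h : {μ | IC κ n μ} ⊆ {l : List ℕ | l.length ≤ κ.length ∧ ∀ x ∈ l, x ≤ n} := by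
    rintro μ ⟨h1, h2, h3, h4⟩
    exact ⟨h1, fun x hx => h4 ▸ List.single_le_sum (fun y _ => Nat.zero_le y) x hx⟩
  exact ((finite_aux κ.length n).subset h).to_subtype

lemma idealCount_zero (κ : List ℕ) : idealCount κ 0 = 1 := by
  rw [idealCount_eq]
  rw [Nat.card_eq_one_iff_unique]
  constructor
  · constructor
    rintro ⟨μ, h⟩ ⟨ν, h'⟩
    have hμ : μ = [] := by
      cases μ with
      | nil => rfl
      | cons x t =>
        have := h.2.1 x (by simp)
        have := h.2.2.2
        simp only [List.sum_cons] at this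
        omega
    have hν : ν = [] := by
      cases ν with
      | nil => rfl
      | cons x t =>
        have := h'.2.1 x (by simp)
        have := h'.2.2.2
        simp only [List.sum_cons] at this
        omega
    subst hμ hν; rfl
  · exact ⟨⟨[], by simp [IC]⟩⟩

lemma idealCount_nil (n : ℕ) (hn : n ≠ 0) : idealCount [] n = 0 := by
  rw [idealCount_eq]
  have : IsEmpty {μ // IC [] n μ} := by
    constructor
    rintro ⟨μ, h1, h2, h3, h4⟩
    have : μ = [] := List.length_eq_zero_iff.mp (by simpa using h1)
    subst this
    simp at h4
    exact hn h4.symm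
  simp [Nat.card_of_isEmpty]

lemma idealCount_cons (k : ℕ) (κ : List ℕ) (n : ℕ) (hn : n ≠ 0) :
    idealCount (k :: κ) n = ∑ i ∈ Finset.Ico (n - k) n, idealCount κ i := by
  rw [idealCount_eq]
  haveI := finite_IC (k :: κ) n
  haveI : Fintype {μ // IC (k :: κ) n μ} := Fintype.ofFinite _
  rw [Nat.card_eq_fintype_card, ← Finset.card_univ]
  rw [Finset.card_eq_sum_card_fiberwise
    (f := fun μ : {μ // IC (k :: κ) n μ} => μ.1.tail.sum)
    (t := Finset.Ico (n - k) n) ?hmem]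
  case hmem =>
    rintro ⟨μ, h1, h2, h3, h4⟩ _
    simp only [Finset.coe_Ico, Set.mem_Ico, Finset.mem_Ico]
    cases μ with
    | nil => simp at h4; exact absurd h4.symm hn
    | cons c t =>
      have hc1 : 1 ≤ c := h2 c (by simp)
      have hck : c ≤ k := by
        have := h3 0 (by simp)
        simpa using this
      simp only [List.sum_cons] at h4
      simp only [List.tail_cons]
      omega
  refine Finset.sum_congr rfl ?_
  intro i hi
  simp only [Finset.mem_Ico] at hi
  haveI := finite_IC κ i
  rw [← Fintype.card_subtype]
  rw [← Nat.card_eq_fintype_card, idealCount_eq]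
  apply Nat.card_congr
  refine ⟨?_, ?_, ?_, ?_⟩
  · -- toFun
    rintro ⟨⟨μ, h1, h2, h3, h4⟩, hf⟩
    refine ⟨μ.tail, ?_, ?_, ?_, hf⟩
    · simpa using Nat.le_trans (Nat.sub_le_sub_right h1 1) (by simp)
    · exact fun x hx => h2 x (List.mem_of_mem_tail hx)
    · cases μ with
      | nil => intro j hj; simp at hj
      | cons c t =>
        intro j hj
        have := h3 (j + 1) (by simpa using Nat.succ_lt_succ hj)
        simpa using this
  · -- invFun
    rintro ⟨μ', h1, h2, h3, h4⟩
    refine ⟨⟨(n - i) :: μ', ?_, ?_, ?_, ?_⟩, by simpa using h4⟩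
    · simpa using Nat.succ_le_succ h1
    · intro x hx
      rcases List.mem_cons.mp hx with rfl | hx
      · omega
      · exact h2 x hx
    · intro j hj
      cases j with
      | zero => simpa using by omega
      | succ j =>
        simp only [List.getD_cons_succ]
        exact h3 j (by simpa using Nat.lt_of_succ_lt_succ hj)
    · simp only [List.sum_cons, h4]; omega
  · -- left_inv
    rintro ⟨⟨μ, h1, h2, h3, h4⟩, hf⟩
    cases μ with
    | nil => simp at h4; exact absurd h4.symm hn
    | cons c t =>
      apply Subtype.ext
      apply Subtype.ext
      simp only [List.tail_cons] at hf ⊢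
      simp only [List.sum_cons] at h4
      have : n - i = c := by omega
      simp [this]
  · -- right_inv
    rintro ⟨μ', h1, h2, h3, h4⟩
    rfl

lemma idealCount_eq_cnt (κ : List ℕ) : ∀ n, idealCount κ n = cnt κ n := by
  induction κ with
  | nil =>
    intro n
    rcases Nat.eq_zero_or_pos n with rfl | hn
    · rw [idealCount_zero, cnt_zero]
    · rw [idealCount_nil n (by omega)]
      rw [show cnt [] n = if n = 0 then 1 else 0 from rfl, if_neg (by omega)]
  | cons k κ ih =>
    intro n
    rcases Nat.eq_zero_or_pos n with rfl | hn
    · rw [idealCount_zero, cnt_zero]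
    · rw [idealCount_cons k κ n (by omega), cnt_cons k κ n (by omega)]
      exact Finset.sum_congr rfl fun i _ => ih i

lemma idealPoly_coeff (κ : List ℕ) (i : ℕ) : (idealPoly κ).coeff i = (cnt κ i : ℝ) := by
  rw [idealPoly]
  rw [Polynomial.finset_sum_coeff]
  simp only [Polynomial.coeff_C_mul, Polynomial.coeff_X_pow, mul_ite, mul_one, mul_zero]
  rw [Finset.sum_ite_eq (Finset.range (κ.sum + 1)) i (fun n => (idealCount κ n : ℝ))]
  by_cases hi : i ∈ Finset.range (κ.sum + 1)
  · rw [if_pos hi, idealCount_eq_cnt]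
  · rw [if_neg hi]
    rw [cnt_eq_zero κ i (by simpa [Nat.lt_succ_iff] using hi)]
    simp

theorem idealPoly_unimodal (κ : List ℕ) (hκ : ∀ x ∈ κ, 1 ≤ x) :
    PolyUnimodal (idealPoly κ) := by
  obtain ⟨m, h1, h2⟩ := cnt_unimodal κ hκ
  refine ⟨m, ?_, ?_⟩
  · intro i hi
    rw [idealPoly_coeff, idealPoly_coeff]
    exact_mod_cast h1 i hi
  · intro i hi
    rw [idealPoly_coeff, idealPoly_coeff]
    exact_mod_cast h2 i hi
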